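/- Let a₄ = 2^{−12} Π_{p odd} [(1−1/p)^{10}/(1+1/p)] · [((1+1/√p)^{−4} + (1−1/√p)^{−4})/2 + 1/p]. Then a₄ = 2^{−12} Π_{p odd} [(1−1/p)^6/(1+1/p)] · (1 + 7/p − 3/p² + 6/p³ − 4/p⁴ + 1/p⁵), and consequently, with Z₁ as in the diagonal Euler product, Z₁(1/2, 1/2) = 4·a₄. -/
import Mathlib

lemma key1 (x : ℝ) (hx : 3 ≤ x) :
    ((1 - 1/x)^10 / (1 + 1/x)) *
      ((((1 + 1/Real.sqrt x)^(-4 : ℤ) + (1 - 1/Real.sqrt x)^(-4 : ℤ)) / 2) + 1/x)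
    = ((1 - 1/x)^6 / (1 + 1/x)) *
        (1 + 7/x - 3/x^2 + 6/x^3 - 4/x^4 + 1/x^5) := by
  have hx0 : (0:ℝ) ≤ x := by linarith
  have hs : Real.sqrt x ^ 2 = x := Real.sq_sqrt hx0
  set s := Real.sqrt x with hsdef
  have hs1 : 1 < s := by nlinarith [Real.sqrt_nonneg x]
  have h0 : s ≠ 0 := by linarith
  have hxne : x ≠ 0 := by linarith
  have hx1 : (1:ℝ) - 1/x ≠ 0 := by
    have : 1/x < 1 := by rw [div_lt_one (by linarith)]; linarith
    linarith
  have hx2 : (1:ℝ) + 1/x ≠ 0 := by positivity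
  have hA : (1 + 1/s) ≠ 0 := by positivity
  have hB : (1 - 1/s) ≠ 0 := by
    have : 1/s < 1 := by rw [div_lt_one (by linarith)]; linarith
    linarith
  have hmid : ((1 + 1/s)^(-4 : ℤ) + (1 - 1/s)^(-4 : ℤ)) / 2
      = (1 + 6/x + 1/x^2) / (1 - 1/x)^4 := by
    rw [zpow_neg, zpow_neg, ← hs]
    rw [show ((4:ℤ) = (4:ℕ)) from rfl, zpow_natCast, zpow_natCast]
    have h1 : (1:ℝ) - 1/s^2 ≠ 0 := by rw [hs]; exact hx1
    have hB4 : ((1:ℝ) - 1/s)^4 ≠ 0 := pow_ne_zero _ hB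
    have hA4 : ((1:ℝ) + 1/s)^4 ≠ 0 := pow_ne_zero _ hA
    have h14 : ((1:ℝ) - 1/s^2)^4 ≠ 0 := pow_ne_zero _ h1
    rw [inv_eq_one_div, inv_eq_one_div, div_add_div _ _ hA4 hB4, div_div,
      div_eq_div_iff (by positivity) h14]
    field_simp
    ring
  rw [hmid]
  have hx14 : ((1:ℝ) - 1/x)^4 ≠ 0 := pow_ne_zero _ hx1
  rw [div_add_div _ _ hx14 hxne, ← mul_div_assoc, div_mul_eq_mul_div,
    div_mul_eq_mul_div, div_div,
    div_eq_div_iff (mul_ne_zero hx2 (mul_ne_zero hx14 hxne)) hx2]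
  field_simp
  ring

lemma key2 (x : ℝ) (hx : 3 ≤ x) :
    (1 - 1/x)^6 *
      (1 + 6/x + 1/x^2 - (1/(x+1)) * (10/x - 5/x^2 + 4/x^3 - 1/x^4))
    = ((1 - 1/x)^6 / (1 + 1/x)) *
        (1 + 7/x - 3/x^2 + 6/x^3 - 4/x^4 + 1/x^5) := by
  have hxne : x ≠ 0 := by linarith
  have hx2 : (1:ℝ) + 1/x ≠ 0 := by positivity
  have hx3 : x + 1 ≠ 0 := by linarith
  field_simp
  ring

lemma prime_le (p : {p : ℕ // p.Prime ∧ p ≠ 2}) : (3:ℝ) ≤ (p:ℕ) := by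
  have h := p.2.1.two_le
  have h2 := p.2.2
  have : 3 ≤ (p:ℕ) := by omega
  exact_mod_cast this



/-- The constant
`a₄ = 2^{−12} Π_{p odd} [(1−1/p)^{10}/(1+1/p)] [((1+1/√p)^{−4} + (1−1/√p)^{−4})/2 + 1/p]`. -/
noncomputable def a4 : ℝ :=
  2^(-12 : ℤ) * ∏' p : {p : ℕ // p.Prime ∧ p ≠ 2},
    ((1 - 1/(p:ℝ))^10 / (1 + 1/(p:ℝ))) *
      ((((1 + 1/Real.sqrt p)^(-4 : ℤ) + (1 - 1/Real.sqrt p)^(-4 : ℤ)) / 2) + 1/(p:ℝ))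

/-- `Z₁(1/2,1/2) = 2^{−10} Π_{p odd} (1−1/p)^6 [1 + 6/p + 1/p² − (1/(p+1))(10/p − 5/p² + 4/p³ − 1/p⁴)]`. -/
noncomputable def Z1half : ℝ :=
  2^(-10 : ℤ) * ∏' p : {p : ℕ // p.Prime ∧ p ≠ 2},
    (1 - 1/(p:ℝ))^6 *
      (1 + 6/(p:ℝ) + 1/(p:ℝ)^2
        - (1/((p:ℝ)+1)) * (10/(p:ℝ) - 5/(p:ℝ)^2 + 4/(p:ℝ)^3 - 1/(p:ℝ)^4))

/-- `a₄` equals the simplified Euler product, and consequently `Z₁(1/2,1/2) = 4 a₄`. -/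
theorem a4_simplified_and_Z1_half :
    a4 = 2^(-12 : ℤ) * ∏' p : {p : ℕ // p.Prime ∧ p ≠ 2},
        ((1 - 1/(p:ℝ))^6 / (1 + 1/(p:ℝ))) *
          (1 + 7/(p:ℝ) - 3/(p:ℝ)^2 + 6/(p:ℝ)^3 - 4/(p:ℝ)^4 + 1/(p:ℝ)^5)
    ∧ Z1half = 4 * a4 := by
  have h1 : a4 = 2^(-12 : ℤ) * ∏' p : {p : ℕ // p.Prime ∧ p ≠ 2},
      ((1 - 1/(p:ℝ))^6 / (1 + 1/(p:ℝ))) *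
        (1 + 7/(p:ℝ) - 3/(p:ℝ)^2 + 6/(p:ℝ)^3 - 4/(p:ℝ)^4 + 1/(p:ℝ)^5) := by
    unfold a4
    congr 1
    exact tprod_congr fun p => key1 _ (prime_le p)
  refine ⟨h1, ?_⟩
  rw [h1]
  unfold Z1half
  rw [tprod_congr fun p : {p : ℕ // p.Prime ∧ p ≠ 2} => key2 ((p:ℕ):ℝ) (prime_le p)]
  rw [← mul_assoc]
  norm_num
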